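/- Let G be a finite simple graph with vertex set V. For every vertex v: the sum over all neighbors a of v of binomial(n1e(v,a), 2) equals F1(v) + F2(v). -/

import Mathlib

open Finset
open scoped Classical

namespace FourProfiles

variable {V : Type*} [Fintype V] [DecidableEq V]

/-- Number of 3-element subsets of `V \ {v}` admitting a labeling `a, b, c` satisfying `P`. -/
noncomputable def cnt3 (v : V) (P : V → V → V → Prop) : ℕ :=
  (((Finset.univ : Finset V).powersetCard 3).filter
    (fun s => v ∉ s ∧ ∃ a ∈ s, ∃ b ∈ s, ∃ c ∈ s, s = {a, b, c} ∧ P a b c)).card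

variable (G : SimpleGraph V)

/-- Induced subgraph on `{v,a,b,c}` has exactly one edge, with `v` an endpoint. -/
noncomputable def F1 (v : V) : ℕ := cnt3 v fun a b c =>
  G.Adj v a ∧ ¬G.Adj v b ∧ ¬G.Adj v c ∧ ¬G.Adj a b ∧ ¬G.Adj a c ∧ ¬G.Adj b c

/-- Induced subgraph on `{v,a,b,c}` is a perfect matching (two disjoint edges). -/
noncomputable def F2 (v : V) : ℕ := cnt3 v fun a b c =>
  G.Adj v a ∧ G.Adj b c ∧ ¬G.Adj v b ∧ ¬G.Adj v c ∧ ¬G.Adj a b ∧ ¬G.Adj a c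

/-- Two-edge path plus isolated vertex, `v` an endpoint of the path. -/
noncomputable def F3 (v : V) : ℕ := cnt3 v fun a b c =>
  G.Adj v a ∧ G.Adj a b ∧ ¬G.Adj v b ∧ ¬G.Adj v c ∧ ¬G.Adj a c ∧ ¬G.Adj b c

/-- Two-edge path plus isolated vertex, `v` the middle vertex of the path. -/
noncomputable def F3' (v : V) : ℕ := cnt3 v fun a b c =>
  G.Adj v a ∧ G.Adj v b ∧ ¬G.Adj a b ∧ ¬G.Adj v c ∧ ¬G.Adj a c ∧ ¬G.Adj b c

/-- Path on four vertices, `v` an endpoint. -/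
noncomputable def F4 (v : V) : ℕ := cnt3 v fun a b c =>
  G.Adj v a ∧ G.Adj a b ∧ G.Adj b c ∧ ¬G.Adj v b ∧ ¬G.Adj v c ∧ ¬G.Adj a c

/-- Path on four vertices, `v` an internal (degree-2) vertex. -/
noncomputable def F4' (v : V) : ℕ := cnt3 v fun a b c =>
  G.Adj v a ∧ G.Adj v b ∧ G.Adj b c ∧ ¬G.Adj a b ∧ ¬G.Adj v c ∧ ¬G.Adj a c

/-- Triangle plus isolated vertex, `v` in the triangle. -/
noncomputable def F5 (v : V) : ℕ := cnt3 v fun a b c =>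
  G.Adj v a ∧ G.Adj v b ∧ G.Adj a b ∧ ¬G.Adj v c ∧ ¬G.Adj a c ∧ ¬G.Adj b c

/-- Star `K_{1,3}`, `v` a leaf. -/
noncomputable def F6 (v : V) : ℕ := cnt3 v fun a b c =>
  G.Adj v a ∧ G.Adj a b ∧ G.Adj a c ∧ ¬G.Adj v b ∧ ¬G.Adj v c ∧ ¬G.Adj b c

/-- Star `K_{1,3}`, `v` the center. -/
noncomputable def F6' (v : V) : ℕ := cnt3 v fun a b c =>
  G.Adj v a ∧ G.Adj v b ∧ G.Adj v c ∧ ¬G.Adj a b ∧ ¬G.Adj a c ∧ ¬G.Adj b c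

/-- 4-cycle. -/
noncomputable def F7 (v : V) : ℕ := cnt3 v fun a b c =>
  G.Adj v a ∧ G.Adj a b ∧ G.Adj b c ∧ G.Adj v c ∧ ¬G.Adj v b ∧ ¬G.Adj a c

/-- Paw (triangle with a pendant edge), `v` the pendant (degree-1) vertex. -/
noncomputable def F8 (v : V) : ℕ := cnt3 v fun a b c =>
  G.Adj v a ∧ G.Adj a b ∧ G.Adj a c ∧ G.Adj b c ∧ ¬G.Adj v b ∧ ¬G.Adj v c

/-- Paw, `v` the degree-3 vertex. -/
noncomputable def F8' (v : V) : ℕ := cnt3 v fun a b c =>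
  G.Adj v a ∧ G.Adj v b ∧ G.Adj a b ∧ G.Adj v c ∧ ¬G.Adj a c ∧ ¬G.Adj b c

/-- Paw, `v` one of the two degree-2 vertices. -/
noncomputable def F8'' (v : V) : ℕ := cnt3 v fun a b c =>
  G.Adj v a ∧ G.Adj v b ∧ G.Adj a b ∧ G.Adj a c ∧ ¬G.Adj v c ∧ ¬G.Adj b c

/-- Diamond (`K4` minus one edge), `v` one of the two degree-2 vertices. -/
noncomputable def F9 (v : V) : ℕ := cnt3 v fun a b c =>
  G.Adj v a ∧ G.Adj v b ∧ G.Adj a b ∧ G.Adj a c ∧ G.Adj b c ∧ ¬G.Adj v c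

/-- Diamond, `v` one of the two degree-3 vertices. -/
noncomputable def F9' (v : V) : ℕ := cnt3 v fun a b c =>
  G.Adj v a ∧ G.Adj v b ∧ G.Adj v c ∧ G.Adj a b ∧ G.Adj a c ∧ ¬G.Adj b c

/-- Complete graph `K4`. -/
noncomputable def F10 (v : V) : ℕ := cnt3 v fun a b c =>
  G.Adj v a ∧ G.Adj v b ∧ G.Adj v c ∧ G.Adj a b ∧ G.Adj a c ∧ G.Adj b c

/-- `|V \ (Γ(v) ∪ Γ(a))|`. -/
noncomputable def n1e (v a : V) : ℕ :=
  (Finset.univ.filter fun x => ¬G.Adj v x ∧ ¬G.Adj a x).card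

/-- `|Γ(v) \ (Γ(a) ∪ {a})|`. -/
noncomputable def n2c (v a : V) : ℕ :=
  (Finset.univ.filter fun x => G.Adj v x ∧ ¬G.Adj a x ∧ x ≠ a).card

/-- `|Γ(a) \ (Γ(v) ∪ {v})|`. -/
noncomputable def n2e (v a : V) : ℕ :=
  (Finset.univ.filter fun x => G.Adj a x ∧ ¬G.Adj v x ∧ x ≠ v).card

/-- `|Γ(v) ∩ Γ(a)|`. -/
noncomputable def n3 (v a : V) : ℕ :=
  (Finset.univ.filter fun x => G.Adj v x ∧ G.Adj a x).card

/-- Number of edges of `G` with neither endpoint in `Γ(v) ∪ {v}`. -/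
noncomputable def n1d (v : V) : ℕ :=
  (((Finset.univ : Finset V).powersetCard 2).filter
    (fun s => ∃ a ∈ s, ∃ b ∈ s, s = {a, b} ∧ G.Adj a b ∧
      ¬G.Adj v a ∧ ¬G.Adj v b ∧ a ≠ v ∧ b ≠ v)).card

/-- Number of triangles of `G` containing `a`. -/
noncomputable def tri (a : V) : ℕ :=
  (((Finset.univ : Finset V).powersetCard 2).filter
    (fun s => ∃ x ∈ s, ∃ y ∈ s, s = {x, y} ∧ G.Adj a x ∧ G.Adj a y ∧ G.Adj x y)).card

/-- Number of 2-element subsets `{x,y}` of `V \ {a}` inducing a two-edge path with `a`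
an endpoint. -/
noncomputable def twoPathEnd (a : V) : ℕ :=
  (((Finset.univ : Finset V).powersetCard 2).filter
    (fun s => a ∉ s ∧ ∃ x ∈ s, ∃ y ∈ s, s = {x, y} ∧ G.Adj a x ∧ G.Adj x y ∧ ¬G.Adj a y)).card

/-- Number of 2-element subsets `{b,c} ⊆ Γ(a)` with `b` adjacent to `c`, `b ∈ Γ(v)`,
`c ∈ Γ(v)`. -/
noncomputable def triIn (v a : V) : ℕ :=
  (((Finset.univ : Finset V).powersetCard 2).filter
    (fun s => ∃ b ∈ s, ∃ c ∈ s, s = {b, c} ∧ G.Adj a b ∧ G.Adj a c ∧ G.Adj b c ∧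
      G.Adj v b ∧ G.Adj v c)).card

/-- Number of 2-element subsets `{b,c} ⊆ Γ(a)` with `b` adjacent to `c`, `b ∉ Γ(v)`,
`c ∉ Γ(v)`. -/
noncomputable def triOut (v a : V) : ℕ :=
  (((Finset.univ : Finset V).powersetCard 2).filter
    (fun s => ∃ b ∈ s, ∃ c ∈ s, s = {b, c} ∧ G.Adj a b ∧ G.Adj a c ∧ G.Adj b c ∧
      ¬G.Adj v b ∧ ¬G.Adj v c)).card

theorem statement3 [DecidableRel G.Adj] (v : V) :
    ∑ a ∈ G.neighborFinset v, Nat.choose (n1e G v a) 2 = F1 G v + F2 G v := by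
  classical
  -- the combined target set
  set A : Finset (Finset V) := (Finset.univ : Finset V).powersetCard 3 with hA
  set Q1 : Finset V → Prop := fun s => v ∉ s ∧ ∃ a ∈ s, ∃ b ∈ s, ∃ c ∈ s, s = {a, b, c} ∧
    (G.Adj v a ∧ ¬G.Adj v b ∧ ¬G.Adj v c ∧ ¬G.Adj a b ∧ ¬G.Adj a c ∧ ¬G.Adj b c) with hQ1
  set Q2 : Finset V → Prop := fun s => v ∉ s ∧ ∃ a ∈ s, ∃ b ∈ s, ∃ c ∈ s, s = {a, b, c} ∧
    (G.Adj v a ∧ G.Adj b c ∧ ¬G.Adj v b ∧ ¬G.Adj v c ∧ ¬G.Adj a b ∧ ¬G.Adj a c) with hQ2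
  set T : Finset (Finset V) := A.filter (fun s => Q1 s ∨ Q2 s) with hT
  -- basic structure lemma for members of T
  have hTmem : ∀ s ∈ T, v ∉ s ∧ ∃ a ∈ s, ∃ b ∈ s, ∃ c ∈ s, s = {a, b, c} ∧
      G.Adj v a ∧ ¬G.Adj v b ∧ ¬G.Adj v c ∧ ¬G.Adj a b ∧ ¬G.Adj a c := by
    intro s hs
    rw [hT, Finset.mem_filter] at hs
    rcases hs.2 with h | h
    · obtain ⟨hv, a, ha, b, hb, c, hc, hsab, h1, h2, h3, h4, h5, h6⟩ := h
      exact ⟨hv, a, ha, b, hb, c, hc, hsab, h1, h2, h3, h4, h5⟩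
    · obtain ⟨hv, a, ha, b, hb, c, hc, hsab, h1, h2, h3, h4, h5, h6⟩ := h
      exact ⟨hv, a, ha, b, hb, c, hc, hsab, h1, h3, h4, h5, h6⟩
  -- Step 1: F1 + F2 = T.card
  have hF1 : F1 G v = (A.filter Q1).card := by
    unfold F1 cnt3
    refine congrArg Finset.card ?_
    ext s
    simp only [Finset.mem_filter, hA, hQ1]
  have hF2 : F2 G v = (A.filter Q2).card := by
    unfold F2 cnt3
    refine congrArg Finset.card ?_
    ext s
    simp only [Finset.mem_filter, hA, hQ2]
  have hdisj : Disjoint (A.filter Q1) (A.filter Q2) := by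
    rw [Finset.disjoint_left]
    intro s h1 h2
    rw [Finset.mem_filter] at h1 h2
    obtain ⟨-, -, a, ha, b, hb, c, hc, hsab, k1, k2, k3, k4, k5, k6⟩ := h1
    obtain ⟨-, -, a', ha', b', hb', c', hc', -, l1, l2, -, -, -, -⟩ := h2
    have key : ∀ x ∈ s, ∀ y ∈ s, ¬ G.Adj x y := by
      intro x hx y hy
      rw [hsab] at hx hy
      simp only [Finset.mem_insert, Finset.mem_singleton] at hx hy
      rcases hx with rfl | rfl | rfl <;> rcases hy with rfl | rfl | rfl <;>
        (intro h; first | exact G.irrefl h | exact k4 h | exact k4 h.symm | exact k5 h | exact k5 h.symm | exact k6 h | exact k6 h.symm)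
    exact key b' hb' c' hc' l2
  have hsum : F1 G v + F2 G v = T.card := by
    rw [hF1, hF2, hT, Finset.filter_or, Finset.card_union_of_disjoint hdisj]
  rw [hsum]
  -- Step 2: T.card = ∑ a ∈ N(v), fiber card
  have hone : ∀ s ∈ T, ((G.neighborFinset v).filter (· ∈ s)).card = 1 := by
    intro s hs
    obtain ⟨hv, a, ha, b, hb, c, hc, hsab, h1, h2, h3, -, -⟩ := hTmem s hs
    rw [Finset.card_eq_one]
    refine ⟨a, ?_⟩
    ext x
    simp only [Finset.mem_filter, SimpleGraph.mem_neighborFinset, Finset.mem_singleton]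
    constructor
    · rintro ⟨hadj, hxs⟩
      rw [hsab] at hxs
      simp only [Finset.mem_insert, Finset.mem_singleton] at hxs
      rcases hxs with rfl | rfl | rfl
      · rfl
      · exact absurd hadj h2
      · exact absurd hadj h3
    · rintro rfl
      exact ⟨h1, ha⟩
  have hswap : T.card = ∑ a ∈ G.neighborFinset v, (T.filter (fun s => a ∈ s)).card := by
    calc T.card = ∑ s ∈ T, 1 := by rw [Finset.card_eq_sum_ones]
    _ = ∑ s ∈ T, ((G.neighborFinset v).filter (· ∈ s)).card :=
        Finset.sum_congr rfl (fun s hs => (hone s hs).symm)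
    _ = ∑ s ∈ T, ∑ a ∈ G.neighborFinset v, if a ∈ s then 1 else 0 := by
        refine Finset.sum_congr rfl fun s _ => ?_
        rw [Finset.card_filter]
    _ = ∑ a ∈ G.neighborFinset v, ∑ s ∈ T, if a ∈ s then 1 else 0 := Finset.sum_comm
    _ = ∑ a ∈ G.neighborFinset v, (T.filter (fun s => a ∈ s)).card := by
        refine Finset.sum_congr rfl fun a _ => ?_
        rw [Finset.card_filter]
  rw [hswap]
  -- Step 3: each fiber has card choose (n1e v a) 2
  refine Finset.sum_congr rfl fun a haN => ?_
  rw [SimpleGraph.mem_neighborFinset] at haN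
  have hMcard : n1e G v a =
      ((Finset.univ : Finset V).filter fun x => ¬G.Adj v x ∧ ¬G.Adj a x).card := by
    unfold n1e
    refine congrArg Finset.card ?_
    ext x
    simp only [Finset.mem_filter]
  rw [hMcard, ← Finset.card_powersetCard]
  refine (Finset.card_bij (fun s _ => s.erase a) ?_ ?_ ?_).symm
  · -- maps into target
    intro s hs
    rw [Finset.mem_filter] at hs
    obtain ⟨hsT, has⟩ := hs
    obtain ⟨hv, a', ha', b, hb, c, hc, hsab, h1, h2, h3, h4, h5⟩ := hTmem s hsT
    have haa' : a = a' := by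
      have : a ∈ ({a', b, c} : Finset V) := hsab ▸ has
      simp only [Finset.mem_insert, Finset.mem_singleton] at this
      rcases this with rfl | rfl | rfl
      · rfl
      · exact absurd haN h2
      · exact absurd haN h3
    subst haa'
    have hcard3 : s.card = 3 := by
      rw [hT, Finset.mem_filter, hA, Finset.mem_powersetCard] at hsT
      exact hsT.1.2
    rw [Finset.mem_powersetCard]
    constructor
    · intro x hx
      rw [Finset.mem_erase] at hx
      obtain ⟨hxa, hxs⟩ := hx
      rw [hsab] at hxs
      simp only [Finset.mem_insert, Finset.mem_singleton] at hxs
      rcases hxs with rfl | rfl | rfl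
      · exact absurd rfl hxa
      · simp only [Finset.mem_filter, Finset.mem_univ, true_and]; exact ⟨h2, h4⟩
      · simp only [Finset.mem_filter, Finset.mem_univ, true_and]; exact ⟨h3, h5⟩
    · rw [Finset.card_erase_of_mem has, hcard3]
  · -- injective
    intro s1 hs1 s2 hs2 heq
    rw [Finset.mem_filter] at hs1 hs2
    rw [← Finset.insert_erase hs1.2, ← Finset.insert_erase hs2.2, heq]
  · -- surjective
    intro t ht
    rw [Finset.mem_powersetCard] at ht
    obtain ⟨htM, htc⟩ := ht
    have hat : a ∉ t := by
      intro h
      have := htM h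
      simp only [Finset.mem_filter, Finset.mem_univ, true_and] at this
      exact this.1 haN
    refine ⟨insert a t, ?_, ?_⟩
    · rw [Finset.mem_filter]
      obtain ⟨x, y, hxy, rfl⟩ := Finset.card_eq_two.mp htc
      have hx := htM (by simp : x ∈ ({x, y} : Finset V))
      have hy := htM (by simp : y ∈ ({x, y} : Finset V))
      simp only [Finset.mem_filter, Finset.mem_univ, true_and] at hx hy
      have hvs : v ∉ insert a ({x, y} : Finset V) := by
        simp only [Finset.mem_insert, Finset.mem_singleton]
        rintro (rfl | rfl | rfl)
        · exact G.irrefl haN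
        · exact hx.2 haN.symm
        · exact hy.2 haN.symm
      constructor
      · rw [hT, Finset.mem_filter]
        constructor
        · rw [hA, Finset.mem_powersetCard]
          refine ⟨Finset.subset_univ _, ?_⟩
          rw [Finset.card_insert_of_notMem hat, htc]
        · have hmema : a ∈ insert a ({x, y} : Finset V) := Finset.mem_insert_self _ _
          have hmemx : x ∈ insert a ({x, y} : Finset V) := by simp
          have hmemy : y ∈ insert a ({x, y} : Finset V) := by simp
          by_cases hbc : G.Adj x y
          · exact Or.inr ⟨hvs, a, hmema, x, hmemx, y, hmemy, rfl,
              haN, hbc, hx.1, hy.1, hx.2, hy.2⟩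
          · exact Or.inl ⟨hvs, a, hmema, x, hmemx, y, hmemy, rfl,
              haN, hx.1, hy.1, hx.2, hy.2, hbc⟩
      · exact Finset.mem_insert_self _ _
    · exact Finset.erase_insert hat

end FourProfiles
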